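/- Let u₁, u₂ : ℝ³ → ℂ³ be C¹ vector fields and q : ℝ³ → ℂ a C¹ scalar function. Then η(q·u₁, q·u₂) = q²·η(u₁, u₂), where η(u₁,u₂) = (∇u₁)u₂ − (∇u₂)u₁ + (div u₁)u₂ − (div u₂)u₁ − 2ᵗ(∇u₁)u₂ + 2ᵗ(∇u₂)u₁. -/

import Mathlib

noncomputable def pd (f : (Fin 3 → ℝ) → ℂ) (i : Fin 3) (x : Fin 3 → ℝ) : ℂ :=
  fderiv ℝ f x (Pi.single i 1)

noncomputable def jacC (u : (Fin 3 → ℝ) → Fin 3 → ℂ) (x : Fin 3 → ℝ) :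
    Matrix (Fin 3) (Fin 3) ℂ :=
  Matrix.of fun i j => pd (fun y => u y i) j x

noncomputable def divC (u : (Fin 3 → ℝ) → Fin 3 → ℂ) (x : Fin 3 → ℝ) : ℂ :=
  ∑ i : Fin 3, pd (fun y => u y i) i x

noncomputable def curlC (u : (Fin 3 → ℝ) → Fin 3 → ℂ) (x : Fin 3 → ℝ) : Fin 3 → ℂ :=
  fun i => pd (fun y => u y (i + 2)) (i + 1) x - pd (fun y => u y (i + 1)) (i + 2) x

noncomputable def lapC (f : (Fin 3 → ℝ) → ℂ) (x : Fin 3 → ℝ) : ℂ :=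
  ∑ i : Fin 3, pd (fun y => pd f i y) i x

noncomputable def etaC (u v : (Fin 3 → ℝ) → Fin 3 → ℂ) (x : Fin 3 → ℝ) : Fin 3 → ℂ :=
  Matrix.mulVec (jacC u x) (v x) - Matrix.mulVec (jacC v x) (u x)
    + divC u x • v x - divC v x • u x
    - (2 : ℂ) • Matrix.mulVec (Matrix.transpose (jacC u x)) (v x)
    + (2 : ℂ) • Matrix.mulVec (Matrix.transpose (jacC v x)) (u x)

noncomputable def gammaC (u v : (Fin 3 → ℝ) → Fin 3 → ℂ) (x : Fin 3 → ℝ) : ℂ :=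
  dotProduct (fun i => pd (fun y => divC u y) i x) (v x)
    - dotProduct (fun i => pd (fun y => divC v y) i x) (u x)
    - dotProduct (fun i => lapC (fun y => u y i) x) (v x)
    + dotProduct (fun i => lapC (fun y => v y i) x) (u x)

lemma pd_mul (f g : (Fin 3 → ℝ) → ℂ) (x : Fin 3 → ℝ)
    (hf : DifferentiableAt ℝ f x) (hg : DifferentiableAt ℝ g x) (j : Fin 3) :
    pd (fun y => f y * g y) j x = f x * pd g j x + g x * pd f j x := by
  unfold pd
  rw [fderiv_fun_mul hf hg]
  simp [mul_comm]

theorem stmt11 (u v : (Fin 3 → ℝ) → Fin 3 → ℂ) (q : (Fin 3 → ℝ) → ℂ)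
    (hu : ContDiff ℝ 1 u) (hv : ContDiff ℝ 1 v) (hq : ContDiff ℝ 1 q) :
    ∀ x, etaC (fun y => q y • u y) (fun y => q y • v y) x = (q x) ^ 2 • etaC u v x := by
  intro x
  have hq' : DifferentiableAt ℝ q x := (hq.differentiable one_ne_zero) x
  have hu' : ∀ k, DifferentiableAt ℝ (fun y => u y k) x := fun k =>
    (differentiableAt_pi.mp ((hu.differentiable one_ne_zero) x)) k
  have hv' : ∀ k, DifferentiableAt ℝ (fun y => v y k) x := fun k =>
    (differentiableAt_pi.mp ((hv.differentiable one_ne_zero) x)) k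
  have keyu : ∀ (k j : Fin 3), pd (fun y => q y * u y k) j x
      = q x * pd (fun y => u y k) j x + u x k * pd q j x := fun k j =>
    pd_mul q (fun y => u y k) x hq' (hu' k) j
  have keyv : ∀ (k j : Fin 3), pd (fun y => q y * v y k) j x
      = q x * pd (fun y => v y k) j x + v x k * pd q j x := fun k j =>
    pd_mul q (fun y => v y k) x hq' (hv' k) j
  funext i
  simp only [etaC, jacC, divC, Matrix.mulVec, dotProduct, Matrix.of_apply,
    Matrix.transpose_apply, Pi.add_apply, Pi.sub_apply, Pi.smul_apply, smul_eq_mul,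
    Fin.sum_univ_three, keyu, keyv]
  ring
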